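/- Characterization of highest-weight elements in the crystal tensor product: for natural numbers a, b and a pair (k, l) with k ≤ a and l ≤ b, one has ẽ(k, l) = none if and only if k = 0 and l ≤ a. (In spin language: u ⊗ v ∈ B(j₁) ⊗ B(j₂) is annihilated by the raising operator iff u is the highest-weight vector of B(j₁) and ε(v) = j₂ − m₂ ≤ 2j₁.) -/
import Mathlib


/-- Kashiwara's lowering operator `f̃` on the crystal tensor product `B_a ⊗ B_b`,
modeled on pairs `(k, l)` of lowering-step counters (`k ≤ a`, `l ≤ b`):
`f̃(k,l) = (k+1, l)` if `a - k > l`; `f̃(k,l) = (k, l+1)` if `a - k ≤ l` and `l < b`;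
`f̃(k,l) = none` otherwise. -/
def ftil (a b : ℕ) (p : ℕ × ℕ) : Option (ℕ × ℕ) :=
  if p.2 < a - p.1 then some (p.1 + 1, p.2)
  else if p.2 < b then some (p.1, p.2 + 1)
  else none

/-- Kashiwara's raising operator `ẽ` on the crystal tensor product `B_a ⊗ B_b`:
`ẽ(k,l) = (k-1, l)` if `a - k ≥ l` and `k > 0`; `ẽ(k,l) = (k, l-1)` if `a - k < l`;
`ẽ(k,l) = none` otherwise. -/
def etil (a b : ℕ) (p : ℕ × ℕ) : Option (ℕ × ℕ) :=
  if p.2 ≤ a - p.1 ∧ 0 < p.1 then some (p.1 - 1, p.2)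
  else if a - p.1 < p.2 then some (p.1, p.2 - 1)
  else none

/-- `n`-fold application of a partially defined crystal operator, propagating `none`. -/
def iterOpt (f : ℕ × ℕ → Option (ℕ × ℕ)) (n : ℕ) (p : ℕ × ℕ) : Option (ℕ × ℕ) :=
  (fun o => o.bind f)^[n] (some p)

/-- Characterization of highest-weight elements in the crystal tensor product:
for `k ≤ a` and `l ≤ b`, `ẽ(k, l) = none` iff `k = 0` and `l ≤ a`. -/
theorem etil_eq_none_iff (a b k l : ℕ) (hk : k ≤ a) (hl : l ≤ b) :
    etil a b (k, l) = none ↔ k = 0 ∧ l ≤ a := by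
  simp only [etil]
  split_ifs with h1 h2 <;> simp <;> omega
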